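/- Let G be a finite tree with at least two vertices (so G is connected and contains no cycle), and let ω0 be any acyclic orientation of G. With p an eventual period of the synchronous edge-reversal sequence from ω0 and m the common number of times each vertex is a sink per period, m/p = 1/2; that is, Conc(ω0) = 1/2. -/

import Mathlib

variable {V : Type*}

/-- `o` is an orientation of the simple graph `G`: it assigns a direction to each
edge of `G` (for adjacent `u, v`, exactly one of `o u v`, `o v u` holds) and relates
no other pairs. -/
def IsOrientation (G : SimpleGraph V) (o : V → V → Prop) : Prop :=
  ∀ u v, (o u v → G.Adj u v) ∧ (G.Adj u v → (o u v ↔ ¬ o v u))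

/-- A sink of an orientation: a vertex with no outgoing edge (every incident edge is
directed toward it). -/
def IsSink (o : V → V → Prop) (v : V) : Prop := ∀ u, ¬ o v u

/-- A directed graph (or orientation) is acyclic when it has no directed cycle. -/
def DirAcyclic (o : V → V → Prop) : Prop := ∀ v, ¬ Relation.TransGen o v v

/-- The synchronous edge-reversal step: every edge incident to a sink is reversed
(every sink becomes a source); all other edges keep their direction. -/
def revStep (o : V → V → Prop) : V → V → Prop :=
  fun u v => (o u v ∧ ¬ IsSink o v) ∨ (o v u ∧ IsSink o u)

/-- The sequence of orientations produced by synchronous edge reversal: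
`orientSeq ω0 s` is the result of `s` edge-reversal steps applied to `ω0`. -/
def orientSeq (ω0 : V → V → Prop) (s : ℕ) : V → V → Prop := revStep^[s] ω0

open SimpleGraph

section TreeLemmas
variable {G : SimpleGraph V}


/-- In a tree, every path has length equal to the distance between its endpoints. -/
lemma tree_path_length_eq_dist (hT : G.IsTree) {z y : V} (P : G.Walk z y)
    (hP : P.IsPath) : P.length = G.dist z y := by
  classical
  obtain ⟨W, hW⟩ := hT.isConnected.exists_walk_length_eq_dist z y
  have hb : W.bypass.IsPath := W.bypass_isPath
  have hble : W.bypass.length ≤ W.length := W.length_bypass_le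
  have hd : G.dist z y ≤ W.bypass.length := SimpleGraph.dist_le _
  have hbl : W.bypass.length = G.dist z y := le_antisymm (by omega) hd
  have := (hT.existsUnique_path z y).unique hP hb
  rw [this, hbl]

/-- In a tree, adjacent vertices have different distances to any vertex. -/
lemma tree_dist_ne_of_adj (hT : G.IsTree) {z x y : V} (hxy : G.Adj x y) :
    G.dist z x ≠ G.dist z y := by
  classical
  intro h
  obtain ⟨W, hW⟩ := hT.isConnected.exists_walk_length_eq_dist z x
  set P := W.bypass with hPdef
  have hP : P.IsPath := W.bypass_isPath
  have hPl : P.length = G.dist z x := tree_path_length_eq_dist hT P hP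
  by_cases hy : y ∈ P.support
  · -- prefix to y is a path of length dist z y, but the rest has length ≥ 1
    have hx : x ≠ y := hxy.ne
    have htake : (P.takeUntil y hy).length = G.dist z y :=
      tree_path_length_eq_dist hT _ (hP.takeUntil hy)
    have hspec := P.take_spec hy
    have hlen : (P.takeUntil y hy).length + (P.dropUntil y hy).length = P.length := by
      rw [← SimpleGraph.Walk.length_append, hspec]
    have hpos : 0 < (P.dropUntil y hy).length := by
      rcases Nat.eq_zero_or_pos (P.dropUntil y hy).length with h0 | h0
      · exact absurd (SimpleGraph.Walk.eq_of_length_eq_zero h0) (fun hh => hx hh.symm)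
      · exact h0
    omega
  · -- concat gives a path z → y of length dist z x + 1
    have hQ : (P.concat hxy).IsPath := by
      rw [SimpleGraph.Walk.isPath_def, SimpleGraph.Walk.support_concat]
      rw [SimpleGraph.Walk.isPath_def] at hP
      simp [List.concat_eq_append, List.nodup_append, hP, hy]
      rintro a ha rfl; exact hy ha
    have hQl : (P.concat hxy).length = G.dist z y := tree_path_length_eq_dist hT _ hQ
    rw [SimpleGraph.Walk.length_concat] at hQl
    omega

/-- In a tree, the closer neighbor is unique. -/
lemma tree_unique_closer_neighbor (hT : G.IsTree) {z x y y' : V}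
    (hxy : G.Adj x y) (hxy' : G.Adj x y')
    (hy : G.dist z y + 1 = G.dist z x) (hy' : G.dist z y' + 1 = G.dist z x) : y = y' := by
  classical
  -- build shortest paths to y and y', concat the edge to x, get two paths z → x
  obtain ⟨W, hW⟩ := hT.isConnected.exists_walk_length_eq_dist z y
  obtain ⟨W', hW'⟩ := hT.isConnected.exists_walk_length_eq_dist z y'
  set P := W.bypass with hPdef
  set P' := W'.bypass with hP'def
  have hP : P.IsPath := W.bypass_isPath
  have hP' : P'.IsPath := W'.bypass_isPath
  have hPl : P.length = G.dist z y := tree_path_length_eq_dist hT P hP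
  have hP'l : P'.length = G.dist z y' := tree_path_length_eq_dist hT P' hP'
  have hxP : x ∉ P.support := by
    intro hx
    have := SimpleGraph.Walk.length_takeUntil_le P hx
    have := SimpleGraph.dist_le (P.takeUntil x hx)
    omega
  have hxP' : x ∉ P'.support := by
    intro hx
    have := SimpleGraph.Walk.length_takeUntil_le P' hx
    have := SimpleGraph.dist_le (P'.takeUntil x hx)
    omega
  have hQ : (P.concat hxy.symm).IsPath := by
    rw [SimpleGraph.Walk.isPath_def, SimpleGraph.Walk.support_concat]
    rw [SimpleGraph.Walk.isPath_def] at hP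
    simp [List.concat_eq_append, List.nodup_append, hP, hxP]
    rintro a ha rfl; exact hxP ha
  have hQ' : (P'.concat hxy'.symm).IsPath := by
    rw [SimpleGraph.Walk.isPath_def, SimpleGraph.Walk.support_concat]
    rw [SimpleGraph.Walk.isPath_def] at hP'
    simp [List.concat_eq_append, List.nodup_append, hP', hxP']
    rintro a ha rfl; exact hxP' ha
  have heq : P.concat hxy.symm = P'.concat hxy'.symm :=
    (hT.existsUnique_path z x).unique hQ hQ'
  obtain ⟨hv, -⟩ := SimpleGraph.Walk.concat_inj heq
  exact hv

end TreeLemmas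

section Aux
variable {G : SimpleGraph V} {o : V → V → Prop}

lemma orientSeq_succ (ω0 : V → V → Prop) (s : ℕ) :
    orientSeq ω0 (s+1) = revStep (orientSeq ω0 s) := Function.iterate_succ_apply' _ _ _

lemma IsOrientation.edge_iff (hor : IsOrientation G o) {u v : V} (h : G.Adj u v) :
    o u v ↔ ¬ o v u := (hor u v).2 h

lemma IsOrientation.adj' (hor : IsOrientation G o) {u v : V} (h : o u v) : G.Adj u v :=
  (hor u v).1 h

lemma not_sink_of_edge {u v : V} (h : o u v) : ¬ IsSink o u := fun hs => hs v h

lemma no_adj_sinks (hor : IsOrientation G o) {u v : V} (h : G.Adj u v)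
    (hu : IsSink o u) (hv : IsSink o v) : False :=
  hu v ((hor.edge_iff h).mpr (hv u))

lemma revStep_isOrientation (hor : IsOrientation G o) : IsOrientation G (revStep o) := by
  intro u v
  constructor
  · rintro (⟨h, -⟩ | ⟨h, -⟩)
    · exact hor.adj' h
    · exact (hor.adj' h).symm
  · intro hadj
    by_cases huv : o u v
    · have hvu : ¬ o v u := (hor.edge_iff hadj).1 huv
      have hnsu : ¬ IsSink o u := not_sink_of_edge huv
      simp only [revStep, _root_.revStep]
      constructor
      · rintro (⟨-, hv⟩ | ⟨h, -⟩) <;> rintro (⟨h', -⟩ | ⟨-, hv'⟩) <;> tauto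
      · intro h
        have hsv : ¬ IsSink o v := by tauto
        tauto
    · have hvu : o v u := by
        by_contra hvu
        exact huv ((hor.edge_iff hadj).mpr hvu)
      have hnsv : ¬ IsSink o v := not_sink_of_edge hvu
      simp only [revStep, _root_.revStep]
      constructor
      · rintro (⟨h, -⟩ | ⟨-, hsu⟩) <;> rintro (⟨-, hv'⟩ | ⟨h', -⟩) <;> tauto
      · intro h
        have : ¬ ((o v u ∧ ¬ IsSink o u) ∨ (o u v ∧ IsSink o v)) := h
        have hsu : IsSink o u := by tauto
        tauto

lemma revStep_dirAcyclic (h : DirAcyclic o) : DirAcyclic (revStep o) := by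
  intro x hx
  by_cases hs : IsSink o x
  · obtain ⟨z, -, hzx⟩ := Relation.TransGen.tail'_iff.mp hx
    exact hzx.elim (fun h' => h'.2 hs) (fun h' => hs z h'.1)
  · have key : ∀ a b, Relation.TransGen (revStep o) a b →
        ¬ IsSink o a → Relation.TransGen o a b ∧ ¬ IsSink o b := by
      intro a b hab
      induction hab with
      | single h' => rintro ha
                     rcases h' with ⟨h1, h2⟩ | ⟨h1, h2⟩
                     · exact ⟨Relation.TransGen.single h1, h2⟩
                     · exact absurd h2 ha
      | tail hab hbc ih =>
          intro ha
          obtain ⟨h1, h2⟩ := ih ha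
          rcases hbc with ⟨g1, g2⟩ | ⟨g1, g2⟩
          · exact ⟨h1.tail g1, g2⟩
          · exact absurd g2 h2
    exact h x (key x x hx hs).1

lemma exists_sink [Finite V] [Nonempty V] (h : DirAcyclic o) : ∃ v, IsSink o v := by
  haveI : IsTrans V (fun a b => Relation.TransGen o b a) :=
    ⟨fun a b c hab hbc => hbc.trans hab⟩
  haveI : IsIrrefl V (fun a b => Relation.TransGen o b a) := ⟨fun a => h a⟩
  obtain ⟨v, -, hv⟩ :=
    (Finite.wellFounded_of_trans_of_irrefl
      (fun a b : V => Relation.TransGen o b a)).has_min Set.univ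
      ⟨Classical.arbitrary V, trivial⟩
  exact ⟨v, fun u hu => hv u trivial (Relation.TransGen.single hu)⟩

end Aux

section Seq
variable {G : SimpleGraph V} {ω0 : V → V → Prop}

lemma orientSeq_isOrientation (hor : IsOrientation G ω0) (s : ℕ) :
    IsOrientation G (orientSeq ω0 s) := by
  induction s with
  | zero => exact hor
  | succ n ih => rw [orientSeq_succ]; exact revStep_isOrientation ih

lemma orientSeq_dirAcyclic (h : DirAcyclic ω0) (s : ℕ) : DirAcyclic (orientSeq ω0 s) := by
  induction s with
  | zero => exact h
  | succ n ih => rw [orientSeq_succ]; exact revStep_dirAcyclic ih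

lemma out_of_sink {s : ℕ} (hor : IsOrientation G (orientSeq ω0 s)) {u v : V}
    (hadj : G.Adj u v) (hs : IsSink (orientSeq ω0 s) u) : orientSeq ω0 (s+1) u v := by
  rw [orientSeq_succ]
  exact Or.inr ⟨(hor.edge_iff hadj.symm).mpr (hs v), hs⟩

lemma sink_not_next {s : ℕ} (hor : IsOrientation G (orientSeq ω0 s)) {v u : V}
    (hadj : G.Adj v u) (hs : IsSink (orientSeq ω0 s) v) :
    ¬ IsSink (orientSeq ω0 (s+1)) v :=
  not_sink_of_edge (out_of_sink hor hadj hs)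

lemma edge_persist {u v : V} : ∀ a b, a ≤ b → orientSeq ω0 a u v →
    (∀ r, a ≤ r → r < b → ¬ IsSink (orientSeq ω0 r) v) → orientSeq ω0 b u v := by
  intro a b hab
  induction b, hab using Nat.le_induction with
  | base => intro h _; exact h
  | succ n hn ih =>
    intro h hr
    have h1 : orientSeq ω0 n u v := ih h (fun r h1 h2 => hr r h1 (by omega))
    rw [orientSeq_succ]
    exact Or.inl ⟨h1, hr n hn (by omega)⟩

lemma sink_between (horS : ∀ s, IsOrientation G (orientSeq ω0 s)) {u v : V} (hadj : G.Adj u v)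
    {t1 t2 : ℕ} (h1 : IsSink (orientSeq ω0 t1) u) (h2 : IsSink (orientSeq ω0 t2) u)
    (hlt : t1 < t2) : ∃ r, t1 < r ∧ r < t2 ∧ IsSink (orientSeq ω0 r) v := by
  by_contra hc
  push_neg at hc
  have e1 : orientSeq ω0 (t1+1) u v := out_of_sink (horS t1) hadj h1
  have e2 : orientSeq ω0 t2 u v :=
    edge_persist (t1+1) t2 (by omega) e1 (fun r hr1 hr2 => hc r (by omega) hr2)
  exact h2 v e2

lemma sink_pred_nbr (horS : ∀ s, IsOrientation G (orientSeq ω0 s)) {v : V} {t : ℕ}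
    (hnb : ∃ u, G.Adj v u) (h : IsSink (orientSeq ω0 (t+1)) v) :
    ∃ u, G.Adj v u ∧ IsSink (orientSeq ω0 t) u := by
  by_contra hc
  push_neg at hc
  have hs : IsSink (orientSeq ω0 t) v := by
    intro u hu
    have hadj := (horS t).adj' hu
    have h1 : orientSeq ω0 (t+1) v u := by
      rw [orientSeq_succ]; exact Or.inl ⟨hu, hc u hadj⟩
    exact h u h1
  obtain ⟨u, hu⟩ := hnb
  exact sink_not_next (horS t) hu hs h

end Seq

lemma count_parity (c : ℕ) (hc : c < 2) :
    ∀ (n B : ℕ), ((Finset.Ico B (B+2*n)).filter (fun s => s % 2 = c)).card = n := by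
  intro n
  induction n with
  | zero => simp
  | succ k ih =>
    intro B
    have hsplit : Finset.Ico B (B+2*(k+1)) =
        Finset.Ico B (B+2*k) ∪ Finset.Ico (B+2*k) (B+2*(k+1)) :=
      (Finset.Ico_union_Ico_eq_Ico (by omega) (by omega)).symm
    have hdisj : Disjoint ((Finset.Ico B (B+2*k)).filter (fun s => s % 2 = c))
        ((Finset.Ico (B+2*k) (B+2*(k+1))).filter (fun s => s % 2 = c)) :=
      Finset.disjoint_filter_filter (Finset.Ico_disjoint_Ico_consecutive _ _ _)
    rw [hsplit, Finset.filter_union, Finset.card_union_of_disjoint hdisj, ih]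
    have h2 : Finset.Ico (B+2*k) (B+2*(k+1)) = {B+2*k, B+2*k+1} := by
      ext x
      simp only [Finset.mem_Ico, Finset.mem_insert, Finset.mem_singleton]
      omega
    rw [h2]
    by_cases hB : (B+2*k) % 2 = c
    · have hB1 : ¬ (B+2*k+1) % 2 = c := by omega
      rw [Finset.filter_insert, if_pos hB, Finset.filter_singleton, if_neg hB1]
      simp
    · have hB1 : (B+2*k+1) % 2 = c := by omega
      rw [Finset.filter_insert, if_neg hB, Finset.filter_singleton, if_pos hB1]
      simp

/-- On a finite tree with at least two vertices, every edge-reversal computation has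
concurrency `Conc(ω0) = m/p = 1/2`, where `p` is an eventual period of the sequence of
orientations and `m` is the common number of times each vertex is a sink per period. -/
theorem tree_edge_reversal_concurrency_half [Fintype V]
    (G : SimpleGraph V) (hT : G.IsTree) (hcard : 2 ≤ Fintype.card V)
    (ω0 : V → V → Prop) (hor : IsOrientation G ω0) (hacy : DirAcyclic ω0)
    (s0 p m : ℕ) (hp : 0 < p)
    (hper : ∀ s, s0 ≤ s → orientSeq ω0 (s + p) = orientSeq ω0 s)
    (hm : ∀ v : V, {s ∈ Set.Ico s0 (s0 + p) | IsSink (orientSeq ω0 s) v}.ncard = m) :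
    (m : ℚ) / (p : ℚ) = 1 / 2 := by
  classical
  have hne : Nonempty V := Fintype.card_pos_iff.mp (by omega)
  have horS : ∀ s, IsOrientation G (orientSeq ω0 s) := orientSeq_isOrientation hor
  have hnbr : ∀ v : V, ∃ u, G.Adj v u := by
    intro v
    obtain ⟨w, hw⟩ := Fintype.exists_ne_of_one_lt_card (by omega) v
    obtain ⟨P⟩ := hT.isConnected.preconnected v w
    cases P with
    | nil => exact absurd rfl hw.symm
    | cons h q => exact ⟨_, h⟩
  have hL3 : ∀ s v, IsSink (orientSeq ω0 s) v → ¬ IsSink (orientSeq ω0 (s+1)) v := by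
    intro s v hs
    obtain ⟨u, hu⟩ := hnbr v
    exact sink_not_next (horS s) hu hs
  have hperk : ∀ s, s0 ≤ s → ∀ k, orientSeq ω0 (s + k*p) = orientSeq ω0 s := by
    intro s hs k
    induction k with
    | zero => simp
    | succ n ih =>
      have e : s + (n+1)*p = (s + n*p) + p := by ring
      rw [e, hper _ (by omega), ih]
  have hKshift : ∀ s, s0 ≤ s → ∀ k v,
      (IsSink (orientSeq ω0 (s + k*p)) v ↔ IsSink (orientSeq ω0 s) v) := by
    intro s hs k v; rw [hperk s hs k]
  have hsetfin : ∀ v : V, {s ∈ Set.Ico s0 (s0 + p) | IsSink (orientSeq ω0 s) v} =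
      ↑((Finset.Ico s0 (s0+p)).filter (fun s => IsSink (orientSeq ω0 s) v)) := by
    intro v
    ext x
    simp [Set.mem_Ico]
  have hm1 : 1 ≤ m := by
    obtain ⟨v1, hv1⟩ := exists_sink (orientSeq_dirAcyclic hacy s0)
    have hmv := hm v1
    rw [hsetfin v1, Set.ncard_coe_finset] at hmv
    have : s0 ∈ (Finset.Ico s0 (s0+p)).filter (fun s => IsSink (orientSeq ω0 s) v1) := by
      simp [Finset.mem_Ico]
      exact ⟨by omega, hv1⟩
    have := Finset.card_pos.mpr ⟨s0, this⟩
    omega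
  have hfirst : ∀ v : V, ∃ t, s0 ≤ t ∧ t < s0 + p ∧ IsSink (orientSeq ω0 t) v := by
    intro v
    have hmv := hm v
    rw [hsetfin v, Set.ncard_coe_finset] at hmv
    have hpos : 0 < ((Finset.Ico s0 (s0+p)).filter
        (fun s => IsSink (orientSeq ω0 s) v)).card := by omega
    obtain ⟨t, ht⟩ := Finset.card_pos.mp hpos
    simp [Finset.mem_Ico] at ht
    exact ⟨t, ht.1.1, ht.1.2, ht.2⟩
  -- the one-step descent
  have hstep : ∀ v t tp,
      IsSink (orientSeq ω0 t) v → IsSink (orientSeq ω0 tp) v → tp + 3 ≤ t →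
      (∀ r, tp < r → r < t → ¬ IsSink (orientSeq ω0 r) v) → s0 ≤ tp →
      s0 + p + 5 ≤ t →
      ∃ u tp', G.Adj u v ∧ IsSink (orientSeq ω0 (t-1)) u ∧
        IsSink (orientSeq ω0 tp') u ∧ tp' + 3 ≤ t-1 ∧
        (∀ r, tp' < r → r < t-1 → ¬ IsSink (orientSeq ω0 r) u) ∧ s0 ≤ tp' := by
    intro v t tp hKt hKtp h3 h4 h5 hbig
    obtain ⟨t', rfl⟩ : ∃ t', t = t'+1 := ⟨t-1, by omega⟩
    obtain ⟨u, huadj, hKu⟩ := sink_pred_nbr horS (hnbr v) hKt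
    have hSne : ((Finset.Ico s0 t').filter (fun r => IsSink (orientSeq ω0 r) u)).Nonempty := by
      obtain ⟨tu, h1, h2, h3'⟩ := hfirst u
      exact ⟨tu, by simp [Finset.mem_Ico]; exact ⟨⟨h1, by omega⟩, h3'⟩⟩
    set tp' := ((Finset.Ico s0 t').filter (fun r => IsSink (orientSeq ω0 r) u)).max' hSne
      with htp'
    have htp'mem := Finset.max'_mem _ hSne
    rw [← htp'] at htp'mem
    simp [Finset.mem_Ico] at htp'mem
    obtain ⟨⟨htp'1, htp'2⟩, htp'K⟩ := htp'mem
    have hmax : ∀ r, tp' < r → r < t' → ¬ IsSink (orientSeq ω0 r) u := by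
      intro r h1 h2 hK
      have hrmem : r ∈ (Finset.Ico s0 t').filter (fun r => IsSink (orientSeq ω0 r) u) := by
        simp [Finset.mem_Ico]
        exact ⟨⟨by omega, h2⟩, hK⟩
      have := Finset.le_max' _ r hrmem
      rw [← htp'] at this
      omega
    have hne1 : ¬ IsSink (orientSeq ω0 (t'-1)) u := by
      intro h
      have h' := hL3 (t'-1) u h
      rw [show t'-1+1 = t' by omega] at h'
      exact h' hKu
    have hne2 : ¬ IsSink (orientSeq ω0 (t'-2)) u := by
      intro h
      obtain ⟨r, hr1, hr2, hrK⟩ := sink_between horS huadj.symm h hKu (by omega)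
      have : r = t'-1 := by omega
      subst this
      exact h4 (t'-1) (by omega) (by omega) hrK
    have h3' : tp' + 3 ≤ t' := by
      by_contra hcon
      have : tp' = t'-1 ∨ tp' = t'-2 := by omega
      rcases this with h | h
      · exact hne1 (h ▸ htp'K)
      · exact hne2 (h ▸ htp'K)
    refine ⟨u, tp', huadj.symm, ?_, htp'K, ?_, ?_, htp'1⟩
    · rw [show t'+1-1 = t' by omega]; exact hKu
    · omega
    · rw [show t'+1-1 = t' by omega]; exact hmax
  -- main alternation lemma
  have hG1 : ∀ t v, s0 ≤ t → IsSink (orientSeq ω0 t) v → IsSink (orientSeq ω0 (t+2)) v := by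
    intro t v ht hKt
    by_contra hK2
    have hex : ∃ r, t < r ∧ IsSink (orientSeq ω0 r) v := by
      obtain ⟨tv, h1, h2, h3'⟩ := hfirst v
      refine ⟨tv + (t+1)*p, ?_, (hKshift tv h1 (t+1) v).mpr h3'⟩
      have : t+1 ≤ (t+1)*p := Nat.le_mul_of_pos_right _ hp
      omega
    obtain ⟨ht2a, ht2K⟩ := Nat.find_spec hex
    set t2 := Nat.find hex with ht2def
    have h4 : ∀ r, t < r → r < t2 → ¬ IsSink (orientSeq ω0 r) v := by
      intro r h1 h2 hK
      exact absurd (Nat.find_min' hex ⟨h1, hK⟩) (by omega)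
    have h3 : t + 3 ≤ t2 := by
      have hn1 : t2 ≠ t+1 := by
        intro h
        exact hL3 t v hKt (h ▸ ht2K)
      have hn2 : t2 ≠ t+2 := by
        intro h
        exact hK2 (h ▸ ht2K)
      omega
    set N := Fintype.card V with hN
    set kk := s0 + p + 7 + N with hkk
    set T := t2 + kk*p with hTdef
    have hkkp : kk ≤ kk * p := Nat.le_mul_of_pos_right _ hp
    have hTbig : s0 + p + 7 + N ≤ T := by omega
    have hTt2 : t2 ≤ T := by omega
    -- shifted bad event at time T
    have hKT : IsSink (orientSeq ω0 T) v := (hKshift t2 (by omega) kk v).mpr ht2K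
    have hKTp : IsSink (orientSeq ω0 (t + kk*p)) v := (hKshift t ht kk v).mpr hKt
    have h4T : ∀ r, t + kk*p < r → r < T → ¬ IsSink (orientSeq ω0 r) v := by
      intro r h1 h2 hK
      have hr' : r - kk*p + kk*p = r := by omega
      have : IsSink (orientSeq ω0 (r - kk*p)) v := by
        rw [← hKshift (r - kk*p) (by omega) kk v, hr']
        exact hK
      exact h4 (r - kk*p) (by omega) (by omega) this
    have h3T : (t + kk*p) + 3 ≤ T := by omega
    -- chain construction
    have hchain : ∀ i, i ≤ N+1 → ∃ w : ℕ → V,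
        (∀ l, l < i → G.Adj (w (l+1)) (w l)) ∧
        (∀ l, l ≤ i → IsSink (orientSeq ω0 (T-l)) (w l) ∧
          ¬ IsSink (orientSeq ω0 (T-l-2)) (w l)) ∧
        ∃ tp, IsSink (orientSeq ω0 (T-i)) (w i) ∧ IsSink (orientSeq ω0 tp) (w i) ∧
          tp + 3 ≤ T-i ∧ (∀ r, tp < r → r < T-i → ¬ IsSink (orientSeq ω0 r) (w i)) ∧
          s0 ≤ tp := by
      intro i hi
      induction i with
      | zero =>
        refine ⟨fun _ => v, fun l hl => absurd hl (by omega), ?_,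
          ⟨t + kk*p, by simpa using hKT, hKTp, by simpa using h3T, by simpa using h4T, by omega⟩⟩
        intro l hl
        have hl0 : l = 0 := by omega
        subst hl0
        refine ⟨by simpa using hKT, ?_⟩
        intro hK
        exact h4T (T-0-2) (by omega) (by omega) hK
      | succ n ih =>
        obtain ⟨w, hadj, hKl, tp, hBn1, hBn2, hBn3, hBn4, hBn5⟩ := ih (by omega)
        have hmarg : s0 + p + 5 ≤ T - n := by omega
        obtain ⟨u, tp', huadj, hu1, hu2, hu3, hu4, hu5⟩ :=
          hstep (w n) (T-n) tp hBn1 hBn2 hBn3 hBn4 hBn5 hmarg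
        have eTn : T - n - 1 = T - (n+1) := by omega
        rw [eTn] at hu1 hu3 hu4
        refine ⟨fun l => if l ≤ n then w l else u, ?_, ?_, ⟨tp', ?_, ?_, ?_, ?_, hu5⟩⟩
        · intro l hl
          by_cases hle : l + 1 ≤ n
          · beta_reduce
            rw [if_pos hle, if_pos (show l ≤ n by omega)]
            exact hadj l (by omega)
          · have hln : l = n := by omega
            beta_reduce
            rw [hln, if_neg (show ¬ (n+1 ≤ n) by omega), if_pos (le_refl n)]
            exact huadj
        · intro l hl
          by_cases hle : l ≤ n
          · beta_reduce
            rw [if_pos hle]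
            exact hKl l hle
          · have hln : l = n+1 := by omega
            beta_reduce
            rw [hln]
            rw [if_neg (show ¬ (n+1 ≤ n) by omega)]
            refine ⟨hu1, ?_⟩
            intro hK
            exact hu4 (T-(n+1)-2) (by omega) (by omega) hK
        · beta_reduce
          rw [if_neg (show ¬ (n+1 ≤ n) by omega)]
          exact hu1
        · beta_reduce
          rw [if_neg (show ¬ (n+1 ≤ n) by omega)]
          exact hu2
        · exact hu3
        · beta_reduce
          rw [if_neg (show ¬ (n+1 ≤ n) by omega)]
          exact hu4
    obtain ⟨w, hadj, hKl, -⟩ := hchain (N+1) le_rfl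
    -- pigeonhole
    obtain ⟨a, ha, b, hb, hab, hwab⟩ :
        ∃ a ∈ Finset.range (N+2), ∃ b ∈ Finset.range (N+2), a ≠ b ∧ w a = w b := by
      apply Finset.exists_ne_map_eq_of_card_lt_of_maps_to (t := (Finset.univ : Finset V))
      · rw [Finset.card_range, Finset.card_univ]
        omega
      · intro a _
        exact Finset.mem_univ (w a)
    simp [Finset.mem_range] at ha hb
    obtain ⟨i, d, hd0, hiN, heq⟩ :
        ∃ i d, 0 < d ∧ i + d ≤ N+1 ∧ w i = w (i+d) := by
      rcases lt_or_gt_of_ne hab with h | h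
      · exact ⟨a, b - a, by omega, by omega, by rw [show a + (b-a) = b by omega]; exact hwab⟩
      · exact ⟨b, a - b, by omega, by omega, by rw [show b + (a-b) = a by omega]; exact hwab.symm⟩
    have hd2 : ∀ l, l + 2 ≤ N+1 → w l ≠ w (l+2) := by
      intro l hl hwe
      have h1 := (hKl (l+2) (by omega)).1
      have h2 := (hKl l (by omega)).2
      rw [← hwe, show T - (l+2) = T - l - 2 by omega] at h1
      exact h2 h1
    -- maximum-distance argument
    obtain ⟨kst, hkmem, hkmax⟩ :=
      Finset.exists_max_image (Finset.Icc i (i+d)) (fun l => G.dist (w i) (w l))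
        ⟨i, by simp [Finset.mem_Icc]⟩
    simp [Finset.mem_Icc] at hkmem
    have hFi : G.dist (w i) (w i) = 0 := SimpleGraph.dist_self
    have hFi1 : G.dist (w i) (w (i+1)) = 1 :=
      SimpleGraph.dist_eq_one_iff_adj.mpr (hadj i (by omega)).symm
    have hFd : G.dist (w i) (w (i+d)) = 0 := by rw [← heq]; exact SimpleGraph.dist_self
    have hk1 : 1 ≤ G.dist (w i) (w kst) := by
      have := hkmax (i+1) (by simp [Finset.mem_Icc]; omega)
      omega
    have hki : i < kst := by
      rcases Nat.lt_or_ge i kst with h | h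
      · exact h
      · have : kst = i := by omega
        subst this
        omega
    have hkd : kst < i + d := by
      rcases Nat.lt_or_ge kst (i+d) with h | h
      · exact h
      · have : kst = i + d := by omega
        subst this
        omega
    have hadjL : G.Adj (w kst) (w (kst-1)) := by
      have h := hadj (kst-1) (by omega)
      rw [show kst-1+1 = kst by omega] at h
      exact h
    have hadjR : G.Adj (w (kst+1)) (w kst) := hadj kst (by omega)
    have htri : ∀ x y : V, G.Adj x y → G.dist (w i) x ≤ G.dist (w i) y + 1 := by
      intro x y hxy
      have h := hT.isConnected.dist_triangle (u := w i) (v := y) (w := x)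
      rw [SimpleGraph.dist_eq_one_iff_adj.mpr hxy.symm] at h
      omega
    have hneL : G.dist (w i) (w kst) ≠ G.dist (w i) (w (kst-1)) :=
      tree_dist_ne_of_adj hT hadjL
    have hneR : G.dist (w i) (w kst) ≠ G.dist (w i) (w (kst+1)) :=
      tree_dist_ne_of_adj hT hadjR.symm
    have hmaxL : G.dist (w i) (w (kst-1)) ≤ G.dist (w i) (w kst) :=
      hkmax (kst-1) (by simp [Finset.mem_Icc]; omega)
    have hmaxR : G.dist (w i) (w (kst+1)) ≤ G.dist (w i) (w kst) :=
      hkmax (kst+1) (by simp [Finset.mem_Icc]; omega)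
    have htriL := htri (w kst) (w (kst-1)) hadjL
    have htriR := htri (w kst) (w (kst+1)) hadjR.symm
    have hL : G.dist (w i) (w (kst-1)) + 1 = G.dist (w i) (w kst) := by omega
    have hR : G.dist (w i) (w (kst+1)) + 1 = G.dist (w i) (w kst) := by omega
    have heq2 : w (kst-1) = w (kst+1) :=
      tree_unique_closer_neighbor hT hadjL hadjR.symm hL hR
    have hneq := hd2 (kst-1) (by omega)
    rw [show kst-1+2 = kst+1 by omega] at hneq
    exact hneq heq2
  -- endgame: alternation, parity of p, and counting
  have hiter : ∀ (v : V) t, s0 ≤ t → IsSink (orientSeq ω0 t) v →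
      ∀ j, IsSink (orientSeq ω0 (t + 2*j)) v := by
    intro v t ht hK j
    induction j with
    | zero => simpa using hK
    | succ n ih =>
      have h := hG1 (t+2*n) v (by omega) ih
      rw [show t+2*(n+1) = t+2*n+2 by ring]
      exact h
  have hchar : ∀ v : V, ∃ tv, s0 ≤ tv ∧ tv < s0 + p ∧
      ∀ s, s0 + p ≤ s → (IsSink (orientSeq ω0 s) v ↔ s % 2 = tv % 2) := by
    intro v
    obtain ⟨tv, h1, h2, h3⟩ := hfirst v
    refine ⟨tv, h1, h2, fun s hs => ⟨?_, ?_⟩⟩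
    · intro hK
      by_contra hpar
      have hprev : IsSink (orientSeq ω0 (s-1)) v := by
        have h := hiter v tv h1 h3 ((s-1-tv)/2)
        rw [show tv + 2*((s-1-tv)/2) = s-1 by omega] at h
        exact h
      have h := hL3 (s-1) v hprev
      rw [show s-1+1 = s by omega] at h
      exact h hK
    · intro hpar
      have h := hiter v tv h1 h3 ((s-tv)/2)
      rw [show tv + 2*((s-tv)/2) = s by omega] at h
      exact h
  obtain ⟨v0⟩ := hne
  obtain ⟨tv, htv1, htv2, hch⟩ := hchar v0
  have hs1K : IsSink (orientSeq ω0 (tv + 2*(s0+p))) v0 :=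
    (hch _ (by omega)).mpr (by omega)
  have hs1K' : IsSink (orientSeq ω0 (tv + 2*(s0+p) + p)) v0 := by
    rw [hper (tv + 2*(s0+p)) (by omega)]
    exact hs1K
  have hpar := (hch _ (by omega)).mp hs1K'
  have hpeven : p % 2 = 0 := by omega
  -- counting
  have hmv := hm v0
  rw [hsetfin v0, Set.ncard_coe_finset] at hmv
  have hshiftcard :
      ((Finset.Ico s0 (s0+p)).filter (fun s => IsSink (orientSeq ω0 s) v0)).card =
      ((Finset.Ico (s0+p) (s0+p+p)).filter (fun s => IsSink (orientSeq ω0 s) v0)).card := by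
    apply Finset.card_bij (fun s _ => s + p)
    · intro s hs
      simp [Finset.mem_Ico] at hs ⊢
      refine ⟨⟨by omega, by omega⟩, ?_⟩
      rw [hper s hs.1.1]
      exact hs.2
    · intro s1 h1 s2 h2 h
      omega
    · intro b hb
      simp [Finset.mem_Ico] at hb
      refine ⟨b - p, ?_, by omega⟩
      simp [Finset.mem_Ico]
      refine ⟨⟨by omega, by omega⟩, ?_⟩
      rw [← hper (b-p) (by omega), show b - p + p = b by omega]
      exact hb.2
  have hfiltereq :
      ((Finset.Ico (s0+p) (s0+p+p)).filter (fun s => IsSink (orientSeq ω0 s) v0)) =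
      ((Finset.Ico (s0+p) (s0+p+p)).filter (fun s => s % 2 = tv % 2)) := by
    apply Finset.filter_congr
    intro x hx
    simp [Finset.mem_Ico] at hx
    simpa using (hch x (by omega))
  have hcount := count_parity (tv % 2) (by omega) (p/2) (s0+p)
  rw [show s0+p+2*(p/2) = s0+p+p by omega] at hcount
  have hm2 : 2 * m = p := by
    rw [hshiftcard, hfiltereq] at hmv
    omega
  have hp0 : (p:ℚ) ≠ 0 := Nat.cast_ne_zero.mpr (by omega)
  rw [div_eq_div_iff hp0 (by norm_num)]
  have hpq : (p:ℚ) = 2 * m := by exact_mod_cast hm2.symm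
  rw [hpq]
  ring
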